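/- Let (W_t)_{t≥0} be a standard one-dimensional Brownian motion and let p, q > 0. For α ∈ ℝ set V_t(α) = ∫₀ᵗ e^{2α W_s} ds. Then, as t → ∞, the ℝ³-valued random vectors (1/√t)·( (1/2)·log V_t(p) , (1/2)·log V_t(−q) , W_t ) converge in distribution to the law of the random vector ( p·max{W_s : 0 ≤ s ≤ 1} , −q·min{W_s : 0 ≤ s ≤ 1} , W₁ ). (This is the key reduction of the central limit theorem for driftless Brownian motion on Sol(p,q), obtained after the Dambis–Dubins–Schwarz time-change, since V_t(p) and V_t(−q) are the quadratic variations of the first two coordinates.) -/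

import Mathlib

open MeasureTheory ProbabilityTheory Filter Real
open Topology

lemma integral01_exp_pos (x : ℝ → ℝ) (hx : Continuous x) (c : ℝ) :
    0 < ∫ u in (0:ℝ)..1, Real.exp (c * x u) := by
  apply intervalIntegral.intervalIntegral_pos_of_pos_on
  · exact Continuous.intervalIntegrable (by continuity) 0 1
  · intro u _; exact Real.exp_pos _
  · norm_num

lemma riemann_sum_tendsto (g : ℝ → ℝ) (hg : Continuous g) :
    Tendsto (fun n : ℕ => (∑ k ∈ Finset.range n, g (k / n)) / n) atTop
      (𝓝 (∫ s in (0:ℝ)..1, g s)) := by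
  rw [Metric.tendsto_atTop]
  intro ε hε
  obtain ⟨δ, hδ, hδ'⟩ := (Metric.uniformContinuousOn_iff.1
    (isCompact_Icc.uniformContinuousOn_of_continuous (hg.continuousOn) :
      UniformContinuousOn g (Set.Icc (0:ℝ) 1))) (ε/2) (by positivity)
  obtain ⟨N, hN⟩ := exists_nat_gt (1/δ)
  refine ⟨N + 1, fun n hn => ?_⟩
  have hn1 : 1 ≤ n := le_trans (by omega) hn
  have hnpos : (0:ℝ) < n := by exact_mod_cast hn1
  have hinv : (1:ℝ)/n < δ := by
    rw [div_lt_iff₀ hnpos]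
    have : 1/δ < (n:ℝ) := lt_of_lt_of_le hN (by exact_mod_cast (show N ≤ n by omega))
    rw [div_lt_iff₀ hδ] at this
    linarith
  have hint : ∀ k, k < n → IntervalIntegrable g volume ((k:ℝ)/n) (((k:ℕ)+1:ℕ)/n : ℝ) :=
    fun k _ => hg.intervalIntegrable _ _
  have hsplit : (∑ k ∈ Finset.range n, ∫ s in ((k:ℝ)/n)..(((k+1:ℕ)):ℝ)/n, g s)
      = ∫ s in ((0:ℕ):ℝ)/n..((n:ℝ))/n, g s := by
    exact intervalIntegral.sum_integral_adjacent_intervals (fun k hk => hg.intervalIntegrable _ _)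
  have h01 : ((n:ℝ))/n = 1 := div_self (ne_of_gt hnpos)
  rw [Real.dist_eq]
  have key : ∀ k ∈ Finset.range n,
      |g ((k:ℝ)/n) / n - ∫ s in ((k:ℝ)/n)..(((k+1:ℕ)):ℝ)/n, g s| ≤ (ε/2) / n := by
    intro k hk
    have hkn : (k:ℕ) < n := Finset.mem_range.1 hk
    have hkle : ((k:ℝ)+1) ≤ n := by exact_mod_cast hkn
    have hstep : (((k+1:ℕ)):ℝ)/n - (k:ℝ)/n = 1/n := by
      push_cast; field_simp; ring
    have hconst : g ((k:ℝ)/n) / n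
        = ∫ s in ((k:ℝ)/n)..(((k+1:ℕ)):ℝ)/n, g ((k:ℝ)/n) := by
      rw [intervalIntegral.integral_const, hstep, smul_eq_mul]
      ring
    rw [hconst, ← intervalIntegral.integral_sub (intervalIntegrable_const (c := g ((k:ℝ)/n)))
      (hg.intervalIntegrable _ _)]
    have hb : ∀ s ∈ Set.uIoc ((k:ℝ)/n) ((((k+1:ℕ)):ℝ)/n),
        ‖g ((k:ℝ)/n) - g s‖ ≤ ε/2 := by
      intro s hs
      have hle : (k:ℝ)/n ≤ (((k+1:ℕ)):ℝ)/n := by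
        gcongr <;> push_cast <;> linarith
      rw [Set.uIoc_of_le hle] at hs
      have hs1 : (k:ℝ)/n < s := hs.1
      have hs2 : s ≤ (((k+1:ℕ)):ℝ)/n := hs.2
      have hmem : s ∈ Set.Icc (0:ℝ) 1 := by
        constructor
        · have : (0:ℝ) ≤ (k:ℝ)/n := by positivity
          linarith
        · have : (((k+1:ℕ)):ℝ)/n ≤ 1 := by
            rw [div_le_one hnpos]; push_cast; linarith
          linarith
      have hmem' : (k:ℝ)/n ∈ Set.Icc (0:ℝ) 1 := by
        constructor
        · positivity
        · rw [div_le_one hnpos]; linarith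
      have hd : dist ((k:ℝ)/n) s < δ := by
        rw [Real.dist_eq, abs_lt]
        constructor
        · have : s - (k:ℝ)/n ≤ 1/n := by linarith [hstep]
          linarith
        · linarith
      have := hδ' _ hmem' _ hmem hd
      rw [Real.dist_eq] at this
      exact le_of_lt this
    have := intervalIntegral.norm_integral_le_of_norm_le_const hb
    rw [hstep] at this
    calc |∫ s in ((k:ℝ)/n)..(((k+1:ℕ)):ℝ)/n, (g ((k:ℝ)/n) - g s)|
        ≤ ε/2 * |1/(n:ℝ)| := this
      _ = (ε/2)/n := by
          rw [abs_of_pos (show (0:ℝ) < 1/(n:ℝ) by positivity)]; ring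
  calc |(∑ k ∈ Finset.range n, g (k/n)) / n - ∫ s in (0:ℝ)..1, g s|
      = |∑ k ∈ Finset.range n,
          (g ((k:ℝ)/n) / n - ∫ s in ((k:ℝ)/n)..(((k+1:ℕ)):ℝ)/n, g s)| := by
        rw [Finset.sum_sub_distrib, hsplit, ← Finset.sum_div]
        norm_num [h01]
    _ ≤ ∑ k ∈ Finset.range n, |g ((k:ℝ)/n) / n - ∫ s in ((k:ℝ)/n)..(((k+1:ℕ)):ℝ)/n, g s| :=
        Finset.abs_sum_le_sum_abs _ _
    _ ≤ ∑ _k ∈ Finset.range n, (ε/2)/n := Finset.sum_le_sum key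
    _ = ε/2 := by
        rw [Finset.sum_const, Finset.card_range, nsmul_eq_mul]
        field_simp
    _ < ε := by linarith

lemma laplace_tendsto (x : ℝ → ℝ) (hx : Continuous x) :
    Tendsto (fun lam : ℝ => Real.log (∫ u in (0:ℝ)..1, Real.exp (lam * x u)) / lam) atTop
      (𝓝 (sSup ((fun s => x s) '' Set.Icc 0 1))) := by
  obtain ⟨z, hz, hzmax⟩ := isCompact_Icc.exists_isMaxOn (Set.nonempty_Icc.2 zero_le_one)
    hx.continuousOn
  have hzmax' : ∀ u ∈ Set.Icc (0:ℝ) 1, x u ≤ x z := fun u hu => hzmax hu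
  have hce : ∀ lam : ℝ, Continuous fun u => Real.exp (lam * x u) :=
    fun lam => Real.continuous_exp.comp (continuous_const.mul hx)
  have hM : sSup ((fun s => x s) '' Set.Icc (0:ℝ) 1) = x z := by
    apply le_antisymm
    · apply csSup_le ((Set.nonempty_Icc.2 zero_le_one).image _)
      rintro _ ⟨u, hu, rfl⟩; exact hzmax' u hu
    · exact le_csSup (isCompact_Icc.bddAbove_image hx.continuousOn) ⟨z, hz, rfl⟩
  rw [hM]
  have hup : ∀ lam : ℝ, 0 < lam →
      Real.log (∫ u in (0:ℝ)..1, Real.exp (lam * x u)) / lam ≤ x z := by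
    intro lam hlam
    rw [div_le_iff₀ hlam]
    have hle : (∫ u in (0:ℝ)..1, Real.exp (lam * x u)) ≤ Real.exp (lam * x z) := by
      have := intervalIntegral.integral_mono_on (μ := volume) (a := (0:ℝ)) (b := 1)
        zero_le_one ((hce lam).intervalIntegrable 0 1)
        (intervalIntegrable_const (c := Real.exp (lam * x z)))
        (fun u hu => Real.exp_le_exp.2 (by
          have := hzmax' u hu
          nlinarith))
      simpa using this
    calc Real.log (∫ u in (0:ℝ)..1, Real.exp (lam * x u))
        ≤ Real.log (Real.exp (lam * x z)) :=
          Real.log_le_log (integral01_exp_pos x hx lam) hle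
      _ = x z * lam := by rw [Real.log_exp]; ring
  rw [Metric.tendsto_atTop]
  intro ε hε
  have hcont : ContinuousAt x z := hx.continuousAt
  obtain ⟨δ, hδ, hδ'⟩ := Metric.continuousAt_iff.1 hcont (ε/4) (by positivity)
  set a := max 0 (z - δ/2) with ha
  set b := min 1 (z + δ/2) with hb
  have hz0 : (0:ℝ) ≤ z := hz.1
  have hz1 : z ≤ 1 := hz.2
  have hab : a < b := by
    apply max_lt <;> apply lt_min <;> linarith
  have hlow : ∀ u ∈ Set.Icc a b, x z - ε/4 < x u := by
    intro u hu
    have h1 : z - δ/2 ≤ u := le_trans (le_max_right _ _) hu.1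
    have h2 : u ≤ z + δ/2 := le_trans hu.2 (min_le_right _ _)
    have hd : dist u z < δ := by
      rw [Real.dist_eq, abs_lt]; constructor <;> linarith
    have := hδ' hd
    rw [Real.dist_eq, abs_lt] at this
    linarith [this.1, this.2]
  have hablen : 0 < b - a := by linarith
  have hlb : ∀ lam : ℝ, 0 < lam →
      Real.log (b - a) + lam * (x z - ε/4)
        ≤ Real.log (∫ u in (0:ℝ)..1, Real.exp (lam * x u)) := by
    intro lam hlam
    have hsub : (b - a) * Real.exp (lam * (x z - ε/4))
        ≤ ∫ u in (0:ℝ)..1, Real.exp (lam * x u) := by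
      have h1 : (b - a) * Real.exp (lam * (x z - ε/4))
          = ∫ u in a..b, Real.exp (lam * (x z - ε/4)) := by
        rw [intervalIntegral.integral_const, smul_eq_mul]
      have h2 : (∫ u in a..b, Real.exp (lam * (x z - ε/4)))
          ≤ ∫ u in a..b, Real.exp (lam * x u) := by
        apply intervalIntegral.integral_mono_on hab.le
          (intervalIntegrable_const (c := Real.exp (lam * (x z - ε/4))))
          ((hce lam).intervalIntegrable a b)
        intro u hu
        apply Real.exp_le_exp.2
        have := hlow u hu
        nlinarith
      have h3 : (∫ u in a..b, Real.exp (lam * x u)) ≤ ∫ u in (0:ℝ)..1, Real.exp (lam * x u) := by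
        have ha0 : (0:ℝ) ≤ a := le_max_left _ _
        have hb1 : b ≤ 1 := min_le_left _ _
        have hcont' : Continuous fun u => Real.exp (lam * x u) := hce lam
        have e1 : (∫ u in (0:ℝ)..1, Real.exp (lam * x u))
            = (∫ u in (0:ℝ)..a, Real.exp (lam * x u)) + (∫ u in a..b, Real.exp (lam * x u))
              + (∫ u in b..(1:ℝ), Real.exp (lam * x u)) := by
          rw [intervalIntegral.integral_add_adjacent_intervals
              (hcont'.intervalIntegrable 0 a)
              (hcont'.intervalIntegrable a b),
            intervalIntegral.integral_add_adjacent_intervals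
              (hcont'.intervalIntegrable 0 b)
              (hcont'.intervalIntegrable b 1)]
        have p1 : 0 ≤ ∫ u in (0:ℝ)..a, Real.exp (lam * x u) :=
          intervalIntegral.integral_nonneg ha0 (fun u _ => (Real.exp_pos _).le)
        have p2 : 0 ≤ ∫ u in b..(1:ℝ), Real.exp (lam * x u) :=
          intervalIntegral.integral_nonneg hb1 (fun u _ => (Real.exp_pos _).le)
        linarith
      linarith [h1 ▸ h2, h3]
    calc Real.log (b - a) + lam * (x z - ε/4)
        = Real.log ((b - a) * Real.exp (lam * (x z - ε/4))) := by
          rw [Real.log_mul (ne_of_gt hablen) (ne_of_gt (Real.exp_pos _)), Real.log_exp]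
      _ ≤ _ := Real.log_le_log (by positivity) hsub
  have htend : Tendsto (fun lam : ℝ => Real.log (b - a) / lam) atTop (𝓝 0) :=
    tendsto_const_nhds.div_atTop tendsto_id
  rw [Metric.tendsto_atTop] at htend
  obtain ⟨Λ₀, hΛ₀⟩ := htend (ε/4) (by positivity)
  refine ⟨max Λ₀ 1, fun lam hlam => ?_⟩
  have hlam1 : (1:ℝ) ≤ lam := le_trans (le_max_right _ _) hlam
  have hlampos : 0 < lam := lt_of_lt_of_le zero_lt_one hlam1
  have hs := hΛ₀ lam (le_trans (le_max_left _ _) hlam)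
  rw [Real.dist_eq, sub_zero] at hs
  have hlow2 : x z - ε/2 < Real.log (∫ u in (0:ℝ)..1, Real.exp (lam * x u)) / lam := by
    have h0 := hlb lam hlampos
    have h1 : (Real.log (b - a) + lam * (x z - ε/4)) / lam
        ≤ Real.log (∫ u in (0:ℝ)..1, Real.exp (lam * x u)) / lam :=
      (div_le_div_iff_of_pos_right hlampos).2 h0
    have h2 : (Real.log (b - a) + lam * (x z - ε/4)) / lam
        = Real.log (b - a) / lam + (x z - ε/4) := by
      field_simp
    rw [h2] at h1
    have h3 : -(ε/4) < Real.log (b - a) / lam := (abs_lt.1 hs).1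
    linarith
  rw [Real.dist_eq, abs_lt]
  constructor
  · linarith
  · have := hup lam hlampos; linarith

lemma sSup_neg_image (x : ℝ → ℝ) (A : Set ℝ) :
    sSup ((fun s => -x s) '' A) = -sInf ((fun s => x s) '' A) := by
  have h : (fun s => -x s) '' A = -((fun s => x s) '' A) := by
    ext y
    simp only [Set.mem_image, Set.mem_neg]
    constructor
    · rintro ⟨s, hs, rfl⟩; exact ⟨s, hs, (neg_neg _).symm⟩
    · rintro ⟨s, hs, hy⟩; exact ⟨s, hs, by rw [hy, neg_neg]⟩
  rw [h, Real.sInf_def, neg_neg]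

lemma tendsto_sqrt_atTop : Tendsto Real.sqrt atTop atTop := by
  apply tendsto_atTop_atTop.2
  intro b
  exact ⟨(max b 0)^2, fun a ha => le_trans (le_max_left _ _) (by
    rw [show a = ((max b 0))^2 + (a - (max b 0)^2) by ring] at *
    calc max b 0 = Real.sqrt ((max b 0)^2) := (Real.sqrt_sq (le_max_right _ _)).symm
      _ ≤ _ := Real.sqrt_le_sqrt (by nlinarith))⟩

lemma tendsto_log_div_two_sqrt : Tendsto (fun T : ℝ => Real.log T / (2 * Real.sqrt T)) atTop (𝓝 0) := by
  have h : Tendsto (fun T : ℝ => Real.log T / T ^ ((1:ℝ)/2)) atTop (𝓝 0) :=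
    (isLittleO_log_rpow_atTop (by norm_num)).tendsto_div_nhds_zero
  have h2 := (h.div_const 2)
  rw [zero_div] at h2
  apply h2.congr'
  filter_upwards [eventually_ge_atTop (0:ℝ)] with T hT
  rw [Real.sqrt_eq_rpow]
  ring

/-- `W` is a standard one-dimensional Brownian motion under `P`: measurable in each time,
almost surely continuous with `W₀ = 0`, Gaussian increments `W_t − W_s ∼ N(0, t−s)`,
and independent increments over consecutive time intervals. -/
def IsStandardBrownianMotion {Ω : Type*} [MeasurableSpace Ω] (P : Measure Ω)
    (W : ℝ → Ω → ℝ) : Prop :=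
  (∀ t : ℝ, Measurable (W t)) ∧
  (∀ᵐ ω ∂P, W 0 ω = 0 ∧ Continuous fun t => W t ω) ∧
  (∀ s t : ℝ, 0 ≤ s → s < t →
    Measure.map (fun ω => W t ω - W s ω) P = gaussianReal 0 ((t - s).toNNReal)) ∧
  (∀ (n : ℕ) (ts : ℕ → ℝ), Monotone ts → (0 ≤ ts 0) →
    iIndepFun
      (fun i : Fin n => fun ω => W (ts (i + 1)) ω - W (ts i) ω) P)

lemma map_joint_eq_pi {Ω : Type*} [MeasurableSpace Ω] (P : Measure Ω) [IsProbabilityMeasure P]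
    {n : ℕ} {X : Fin n → Ω → ℝ} (hmeas : ∀ i, Measurable (X i))
    (h : iIndepFun X P) :
    Measure.map (fun ω i => X i ω) P = Measure.pi (fun i => Measure.map (X i) P) := by
  haveI : ∀ i, IsProbabilityMeasure (Measure.map (X i) P) :=
    fun i => Measure.isProbabilityMeasure_map (hmeas i).aemeasurable
  refine (Measure.pi_eq fun s hs => ?_).symm
  rw [Measure.map_apply (measurable_pi_lambda _ fun i => hmeas i) (MeasurableSet.univ_pi hs)]
  have hpre : (fun ω i => X i ω) ⁻¹' Set.pi Set.univ s = ⋂ i ∈ Finset.univ, X i ⁻¹' s i := by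
    ext ω; simp [Set.mem_univ_pi]
  rw [hpre, h.measure_inter_preimage_eq_mul Finset.univ (fun i _ => hs i)]
  refine Finset.prod_congr rfl fun i _ => ?_
  rw [Measure.map_apply (hmeas i) (hs i)]

noncomputable def csum (n : ℕ) (y : Fin n → ℝ) (k : Fin (n+1)) : ℝ :=
  ∑ i ∈ Finset.range (k : ℕ), if h : i < n then y ⟨i, h⟩ else 0

lemma csum_measurable (n : ℕ) : Measurable (csum n) := by
  apply measurable_pi_lambda
  intro k
  apply Finset.measurable_sum
  intro i _
  split
  · exact measurable_pi_apply _
  · exact measurable_const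

lemma map_grid_eq {Ω : Type*} [MeasurableSpace Ω] (P : Measure Ω) [IsProbabilityMeasure P]
    (W : ℝ → Ω → ℝ) (hW : IsStandardBrownianMotion P W) (n : ℕ) (hn : 0 < n) :
    Measure.map (fun ω (k : Fin (n+1)) => W ((k : ℕ) / n) ω) P
      = Measure.map (csum n) (Measure.pi fun _ : Fin n => gaussianReal 0 ((1:ℝ)/n).toNNReal) := by
  obtain ⟨hmeas, hae, hinc, hind⟩ := hW
  have hnR : (0:ℝ) < n := by exact_mod_cast hn
  set ts : ℕ → ℝ := fun k => (k : ℝ)/n with hts_def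
  have hts : Monotone ts := fun a b hab => by
    have : (a:ℝ) ≤ (b:ℝ) := by exact_mod_cast hab
    simp only [hts_def]
    exact (div_le_div_iff_of_pos_right hnR).2 this
  have hts0 : 0 ≤ ts 0 := by simp [hts_def]
  set X : Fin n → Ω → ℝ := fun i ω => W (ts ((i : ℕ) + 1)) ω - W (ts (i : ℕ)) ω with hX_def
  have hXmeas : ∀ i, Measurable (X i) := fun i => (hmeas _).sub (hmeas _)
  have hXind : iIndepFun X P := hind n ts hts hts0
  have hlaw : ∀ i : Fin n, Measure.map (X i) P = gaussianReal 0 ((1:ℝ)/n).toNNReal := by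
    intro i
    have h1 : (0:ℝ) ≤ ts (i : ℕ) := by positivity
    have h2 : ts (i : ℕ) < ts ((i : ℕ) + 1) := by
      apply div_lt_div_of_pos_right ?_ hnR
      · push_cast; linarith
    have := hinc _ _ h1 h2
    have hd : ts ((i : ℕ) + 1) - ts (i : ℕ) = (1:ℝ)/n := by
      simp only [hts_def]; push_cast; field_simp; ring
    rw [hd] at this
    exact this
  have hjoint : Measure.map (fun ω i => X i ω) P
      = Measure.pi (fun _ : Fin n => gaussianReal 0 ((1:ℝ)/n).toNNReal) := by
    rw [map_joint_eq_pi P hXmeas hXind]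
    exact congrArg _ (funext hlaw)
  have hcomp : Measure.map (csum n ∘ fun ω i => X i ω) P
      = Measure.map (csum n) (Measure.pi fun _ : Fin n => gaussianReal 0 ((1:ℝ)/n).toNNReal) := by
    rw [← hjoint, ← Measure.map_map (csum_measurable n) (measurable_pi_lambda _ fun i => hXmeas i)]
  rw [← hcomp]
  apply Measure.map_congr
  filter_upwards [hae] with ω hω
  funext k
  have hk : (k : ℕ) ≤ n := Nat.lt_succ_iff.1 k.isLt
  show W ((k : ℕ) / n) ω = ∑ i ∈ Finset.range (k : ℕ), if h : i < n then X ⟨i, h⟩ ω else 0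
  have : ∀ i ∈ Finset.range (k : ℕ), (if h : i < n then X ⟨i, h⟩ ω else 0)
      = W (ts (i + 1)) ω - W (ts i) ω := by
    intro i hi
    have hi' : i < n := lt_of_lt_of_le (Finset.mem_range.1 hi) hk
    rw [dif_pos hi']
  rw [Finset.sum_congr rfl this, Finset.sum_range_sub (fun i => W (ts i) ω)]
  simp only [hts_def]
  rw [show ((0:ℕ):ℝ)/n = 0 by simp, hω.1, sub_zero]

lemma bm_scale {Ω : Type*} [MeasurableSpace Ω] (P : Measure Ω) [IsProbabilityMeasure P]
    (W : ℝ → Ω → ℝ) (hW : IsStandardBrownianMotion P W) (T : ℝ) (hT : 0 < T) :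
    IsStandardBrownianMotion P (fun u ω => W (u * T) ω / Real.sqrt T) := by
  obtain ⟨hmeas, hae, hinc, hind⟩ := hW
  have hsT : 0 < Real.sqrt T := Real.sqrt_pos.2 hT
  refine ⟨fun t => (hmeas _).div_const _, ?_, ?_, ?_⟩
  · filter_upwards [hae] with ω hω
    refine ⟨by simp [hω.1], ?_⟩
    exact (hω.2.comp (continuous_id.mul continuous_const)).div_const _
  · intro s t hs hst
    have h1 : Measure.map (fun ω => W (t*T) ω - W (s*T) ω) P
        = gaussianReal 0 ((t*T - s*T).toNNReal) :=
      hinc (s*T) (t*T) (by positivity) (by nlinarith)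
    have hmm : (fun ω => W (t*T) ω / Real.sqrt T - W (s*T) ω / Real.sqrt T)
        = ((Real.sqrt T)⁻¹ * ·) ∘ (fun ω => W (t*T) ω - W (s*T) ω) := by
      funext ω; simp [Function.comp]; ring
    rw [hmm, ← Measure.map_map (f := fun ω => W (t*T) ω - W (s*T) ω) (measurable_const_mul _) ((hmeas _).sub (hmeas _)), h1,
      gaussianReal_map_const_mul]
    have h2 : 0 ≤ t - s := by linarith
    congr 1
    · simp
    · apply NNReal.coe_injective
      push_cast
      rw [Real.coe_toNNReal _ (by nlinarith), Real.coe_toNNReal _ h2]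
      rw [inv_pow, Real.sq_sqrt hT.le]
      field_simp
  · intro n ts hts hts0
    have h1 := hind n (fun k => ts k * T)
      (fun a b hab => mul_le_mul_of_nonneg_right (hts hab) hT.le) (mul_nonneg hts0 hT.le)
    have h2 := h1.comp (fun _ => fun x : ℝ => x / Real.sqrt T)
      (fun _ => measurable_id.div_const _)
    convert h2 using 1
    funext i ω
    simp [Function.comp, sub_div]

/-- `V_t(α) = ∫₀ᵗ e^{2α W_s} ds`, the quadratic variation arising in the
Dambis–Dubins–Schwarz reduction of driftless Brownian motion on `Sol(p,q)`. -/
noncomputable def quadVar {Ω : Type*} (W : ℝ → Ω → ℝ) (α t : ℝ) (ω : Ω) : ℝ :=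
  ∫ s in (0:ℝ)..t, Real.exp (2 * α * W s ω)

noncomputable def phiD (p q T : ℝ) (n : ℕ) (c : Fin (n+1) → ℝ) : ℝ × ℝ × ℝ :=
  ( (Real.log T + Real.log ((∑ i : Fin n, Real.exp (2*p*Real.sqrt T * c i.castSucc)) / n))
      / (2*Real.sqrt T),
    (Real.log T + Real.log ((∑ i : Fin n, Real.exp (2*(-q)*Real.sqrt T * c i.castSucc)) / n))
      / (2*Real.sqrt T),
    c (Fin.last n) )

noncomputable def gvec (p q T : ℝ) (x : ℝ → ℝ) : ℝ × ℝ × ℝ :=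
  ( (Real.log T + Real.log (∫ u in (0:ℝ)..1, Real.exp (2*p*Real.sqrt T * x u)))
      / (2*Real.sqrt T),
    (Real.log T + Real.log (∫ u in (0:ℝ)..1, Real.exp (2*(-q)*Real.sqrt T * x u)))
      / (2*Real.sqrt T),
    x 1 )

lemma measurable_phiD (p q T : ℝ) (n : ℕ) : Measurable (phiD p q T n) := by
  have hsum : ∀ a : ℝ, Measurable fun c : Fin (n+1) → ℝ =>
      ∑ i : Fin n, Real.exp (a * c i.castSucc) := by
    intro a
    apply Finset.measurable_sum
    intro i _
    exact Real.continuous_exp.measurable.comp (measurable_const.mul (measurable_pi_apply i.castSucc))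
  refine Measurable.prodMk ?_ (Measurable.prodMk ?_ (measurable_pi_apply _))
  · exact ((Real.measurable_log.comp ((hsum _).div_const _)).const_add _).div_const _
  · exact ((Real.measurable_log.comp ((hsum _).div_const _)).const_add _).div_const _

lemma tendsto_phiD_integral {Ω : Type*} [MeasurableSpace Ω] (P : Measure Ω)
    [IsProbabilityMeasure P] (X : ℝ → Ω → ℝ) (hX : IsStandardBrownianMotion P X)
    (p q T : ℝ) (f : BoundedContinuousFunction (ℝ × ℝ × ℝ) ℝ) :
    Tendsto (fun n : ℕ => ∫ ω, f (phiD p q T n (fun k => X ((k:ℕ)/(n:ℝ)) ω)) ∂P) atTop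
      (𝓝 (∫ ω, f (gvec p q T (fun u => X u ω)) ∂P)) := by
  obtain ⟨hmeas, hae, _, _⟩ := hX
  apply tendsto_integral_of_dominated_convergence (bound := fun _ => ‖f‖)
  · intro n
    apply Measurable.aestronglyMeasurable
    exact f.continuous.measurable.comp
      ((measurable_phiD p q T n).comp (measurable_pi_lambda _ fun k => hmeas _))
  · exact integrable_const _
  · intro n
    exact Filter.Eventually.of_forall fun ω => f.norm_coe_le_norm _
  · filter_upwards [hae] with ω hω
    apply (f.continuous.tendsto _).comp
    have hxc : Continuous fun u => X u ω := hω.2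
    -- convergence of each Riemann sum
    have hsum : ∀ a : ℝ, Tendsto
        (fun n : ℕ => (∑ i : Fin n, Real.exp (a * X ((i.castSucc : ℕ)/(n:ℝ)) ω)) / n) atTop
        (𝓝 (∫ u in (0:ℝ)..1, Real.exp (a * X u ω))) := by
      intro a
      have := riemann_sum_tendsto (fun s => Real.exp (a * X s ω))
        (Real.continuous_exp.comp (continuous_const.mul hxc))
      apply this.congr
      intro n
      congr 1
      rw [Finset.sum_range fun k => Real.exp (a * X ((k:ℕ)/(n:ℝ)) ω)]
      apply Finset.sum_congr rfl
      intro i _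
      simp [Fin.coe_castSucc]
    have hpos : ∀ a : ℝ, (0:ℝ) < ∫ u in (0:ℝ)..1, Real.exp (a * X u ω) :=
      fun a => integral01_exp_pos _ hxc a
    have hcoord : ∀ a : ℝ, Tendsto
        (fun n : ℕ => (Real.log T +
            Real.log ((∑ i : Fin n, Real.exp (a * X ((i.castSucc : ℕ)/(n:ℝ)) ω)) / n))
              / (2*Real.sqrt T)) atTop
        (𝓝 ((Real.log T + Real.log (∫ u in (0:ℝ)..1, Real.exp (a * X u ω))) / (2*Real.sqrt T))) := by
      intro a
      exact ((((hsum a).log (ne_of_gt (hpos a))).const_add _).div_const _)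
    have hthird : Tendsto (fun n : ℕ => X ((Fin.last n : ℕ)/(n:ℝ)) ω) atTop (𝓝 (X 1 ω)) := by
      have : ∀ᶠ n : ℕ in atTop, X ((Fin.last n : ℕ)/(n:ℝ)) ω = X 1 ω := by
        filter_upwards [eventually_ge_atTop 1] with n hn
        have : ((Fin.last n : ℕ) : ℝ)/(n:ℝ) = 1 := by
          simp only [Fin.val_last]
          rw [div_self]
          exact_mod_cast Nat.pos_of_ne_zero (by omega) |>.ne'
        rw [this]
      exact tendsto_const_nhds.congr' (by filter_upwards [this] with n h using h.symm)
    exact Tendsto.prodMk_nhds (hcoord _) (Tendsto.prodMk_nhds (hcoord _) hthird)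

lemma phiD_integral_eq {Ω : Type*} [MeasurableSpace Ω] (P : Measure Ω)
    [IsProbabilityMeasure P] (X Y : ℝ → Ω → ℝ)
    (hX : IsStandardBrownianMotion P X) (hY : IsStandardBrownianMotion P Y)
    (p q T : ℝ) (f : BoundedContinuousFunction (ℝ × ℝ × ℝ) ℝ) (n : ℕ) (hn : 0 < n) :
    ∫ ω, f (phiD p q T n (fun k => X ((k:ℕ)/(n:ℝ)) ω)) ∂P
      = ∫ ω, f (phiD p q T n (fun k => Y ((k:ℕ)/(n:ℝ)) ω)) ∂P := by
  have hfmeas : AEStronglyMeasurable (fun c => f (phiD p q T n c))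
      (Measure.map (csum n) (Measure.pi fun _ : Fin n => gaussianReal 0 ((1:ℝ)/n).toNNReal)) :=
    (f.continuous.measurable.comp (measurable_phiD p q T n)).aestronglyMeasurable
  have h1 : ∫ ω, f (phiD p q T n (fun k => X ((k:ℕ)/(n:ℝ)) ω)) ∂P
      = ∫ c, f (phiD p q T n c)
          ∂(Measure.map (fun ω (k : Fin (n+1)) => X ((k:ℕ)/(n:ℝ)) ω) P) := by
    rw [integral_map (f := fun c => f (phiD p q T n c)) (measurable_pi_lambda _ fun k => hX.1 _).aemeasurable]
    rw [map_grid_eq P X hX n hn]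
    exact hfmeas
  have h2 : ∫ ω, f (phiD p q T n (fun k => Y ((k:ℕ)/(n:ℝ)) ω)) ∂P
      = ∫ c, f (phiD p q T n c)
          ∂(Measure.map (fun ω (k : Fin (n+1)) => Y ((k:ℕ)/(n:ℝ)) ω) P) := by
    rw [integral_map (f := fun c => f (phiD p q T n c)) (measurable_pi_lambda _ fun k => hY.1 _).aemeasurable]
    rw [map_grid_eq P Y hY n hn]
    exact hfmeas
  rw [h1, h2, map_grid_eq P X hX n hn, map_grid_eq P Y hY n hn]

lemma gvec_integral_eq {Ω : Type*} [MeasurableSpace Ω] (P : Measure Ω)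
    [IsProbabilityMeasure P] (X Y : ℝ → Ω → ℝ)
    (hX : IsStandardBrownianMotion P X) (hY : IsStandardBrownianMotion P Y)
    (p q T : ℝ) (f : BoundedContinuousFunction (ℝ × ℝ × ℝ) ℝ) :
    ∫ ω, f (gvec p q T (fun u => X u ω)) ∂P = ∫ ω, f (gvec p q T (fun u => Y u ω)) ∂P := by
  apply tendsto_nhds_unique ((tendsto_phiD_integral P X hX p q T f).congr' ?_)
    (tendsto_phiD_integral P Y hY p q T f)
  filter_upwards [eventually_gt_atTop 0] with n hn
  exact phiD_integral_eq P X Y hX hY p q T f n hn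

lemma aesm_gvec {Ω : Type*} [MeasurableSpace Ω] (P : Measure Ω) [IsProbabilityMeasure P]
    (W : ℝ → Ω → ℝ) (hW : IsStandardBrownianMotion P W) (p q T : ℝ)
    (f : BoundedContinuousFunction (ℝ × ℝ × ℝ) ℝ) :
    AEStronglyMeasurable (fun ω => f (gvec p q T (fun u => W u ω))) P := by
  obtain ⟨hmeas, hae, _, _⟩ := hW
  have hI : ∀ a : ℝ, AEMeasurable (fun ω => ∫ u in (0:ℝ)..1, Real.exp (a * W u ω)) P := by
    intro a
    apply aemeasurable_of_tendsto_metrizable_ae atTop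
      (f := fun (n : ℕ) ω => (∑ k ∈ Finset.range n, Real.exp (a * W ((k:ℕ)/(n:ℝ)) ω)) / n)
    · intro n
      exact ((Finset.measurable_sum _ fun k _ =>
        Real.continuous_exp.measurable.comp ((hmeas _).const_mul a)).div_const _).aemeasurable
    · filter_upwards [hae] with ω hω
      exact riemann_sum_tendsto (fun s => Real.exp (a * W s ω))
        (Real.continuous_exp.comp (continuous_const.mul hω.2))
  have hc : ∀ a : ℝ, AEMeasurable (fun ω =>
      (Real.log T + Real.log (∫ u in (0:ℝ)..1, Real.exp (a * W u ω))) / (2*Real.sqrt T)) P :=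
    fun a => (((Real.measurable_log.comp_aemeasurable (hI a)).const_add _).div_const _)
  apply AEMeasurable.aestronglyMeasurable
  exact f.continuous.measurable.comp_aemeasurable
    (((hc _).prodMk ((hc _).prodMk (hmeas 1).aemeasurable)))

lemma tendsto_gvec_integral {Ω : Type*} [MeasurableSpace Ω] (P : Measure Ω)
    [IsProbabilityMeasure P] (W : ℝ → Ω → ℝ) (hW : IsStandardBrownianMotion P W)
    (p q : ℝ) (hp : 0 < p) (hq : 0 < q) (f : BoundedContinuousFunction (ℝ × ℝ × ℝ) ℝ) :
    Tendsto (fun T : ℝ => ∫ ω, f (gvec p q T (fun u => W u ω)) ∂P) atTop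
      (𝓝 (∫ ω, f (p * sSup ((fun s => W s ω) '' Set.Icc (0:ℝ) 1),
                  -q * sInf ((fun s => W s ω) '' Set.Icc (0:ℝ) 1),
                  W 1 ω) ∂P)) := by
  apply tendsto_integral_filter_of_dominated_convergence (bound := fun _ => ‖f‖)
  · exact Filter.Eventually.of_forall fun T => aesm_gvec P W hW p q T f
  · exact Filter.Eventually.of_forall fun T =>
      Filter.Eventually.of_forall fun ω => f.norm_coe_le_norm _
  · exact integrable_const _
  · filter_upwards [hW.2.1] with ω hω
    apply (f.continuous.tendsto _).comp
    have hxc : Continuous fun u => W u ω := hω.2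
    -- first coordinate
    have hcoord : ∀ r : ℝ, 0 < r → ∀ x : ℝ → ℝ, Continuous x →
        Tendsto (fun T : ℝ =>
          (Real.log T + Real.log (∫ u in (0:ℝ)..1, Real.exp (2*r*Real.sqrt T * x u)))
            / (2*Real.sqrt T)) atTop
          (𝓝 (r * sSup ((fun s => x s) '' Set.Icc (0:ℝ) 1))) := by
      intro r hr x hx
      have t2 : Tendsto (fun T : ℝ => 2*r*Real.sqrt T) atTop atTop := by
        have := _root_.tendsto_sqrt_atTop.const_mul_atTop (show (0:ℝ) < 2*r by linarith)
        exact this.congr fun T => by ring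
      have t3 := ((laplace_tendsto x hx).comp t2).const_mul r
      have t1 := tendsto_log_div_two_sqrt
      have := t1.add t3
      rw [zero_add] at this
      apply this.congr'
      filter_upwards [eventually_ge_atTop (1:ℝ)] with T hT
      have hsT : 0 < Real.sqrt T := Real.sqrt_pos.2 (by linarith)
      have hrr : (2*r*Real.sqrt T) ≠ 0 := by positivity
      simp only [Function.comp]
      field_simp
    have h1 := hcoord p hp _ hxc
    have h2' := hcoord q hq (fun s => -(W s ω)) hxc.neg
    rw [sSup_neg_image] at h2'
    have h2 : Tendsto (fun T : ℝ =>
        (Real.log T + Real.log (∫ u in (0:ℝ)..1, Real.exp (2*(-q)*Real.sqrt T * W u ω)))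
          / (2*Real.sqrt T)) atTop
        (𝓝 (-q * sInf ((fun s => W s ω) '' Set.Icc (0:ℝ) 1))) := by
      have := h2'
      rw [show q * -sInf ((fun s => W s ω) '' Set.Icc (0:ℝ) 1)
          = -q * sInf ((fun s => W s ω) '' Set.Icc (0:ℝ) 1) by ring] at this
      apply this.congr
      intro T
      congr 2
      congr 1
      apply intervalIntegral.integral_congr
      intro u _
      simp only []
      congr 1
      ring
    exact h1.prodMk_nhds (h2.prodMk_nhds tendsto_const_nhds)

/-- Central limit theorem, driftless case: the normalized vector
`(1/√t)((1/2)log V_t(p), (1/2)log V_t(−q), W_t)` converges in distribution (tested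
against bounded continuous functions) to
`(p·max_{[0,1]} W, −q·min_{[0,1]} W, W₁)`. -/
theorem clt_driftless {Ω : Type*} [MeasurableSpace Ω] (P : Measure Ω)
    [IsProbabilityMeasure P] (W : ℝ → Ω → ℝ) (hW : IsStandardBrownianMotion P W)
    (p q : ℝ) (hp : 0 < p) (hq : 0 < q) :
    ∀ f : BoundedContinuousFunction (ℝ × ℝ × ℝ) ℝ,
      Tendsto (fun t : ℝ =>
          ∫ ω, f (((1/2) * Real.log (quadVar W p t ω)) / Real.sqrt t,
                  ((1/2) * Real.log (quadVar W (-q) t ω)) / Real.sqrt t,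
                  W t ω / Real.sqrt t) ∂P)
        atTop
        (nhds (∫ ω, f (p * sSup ((fun s => W s ω) '' Set.Icc (0:ℝ) 1),
                       -q * sInf ((fun s => W s ω) '' Set.Icc (0:ℝ) 1),
                       W 1 ω) ∂P)) := by
  intro f
  have hgv := tendsto_gvec_integral P W hW p q hp hq f
  apply Tendsto.congr' ?_ hgv
  filter_upwards [eventually_ge_atTop (1:ℝ)] with T hT
  have hT0 : (0:ℝ) < T := by linarith
  have hsT : 0 < Real.sqrt T := Real.sqrt_pos.2 hT0
  have hA : ∀ᵐ ω ∂P, f (((1/2) * Real.log (quadVar W p T ω)) / Real.sqrt T,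
      ((1/2) * Real.log (quadVar W (-q) T ω)) / Real.sqrt T, W T ω / Real.sqrt T)
      = f (gvec p q T (fun u => W (u * T) ω / Real.sqrt T)) := by
    filter_upwards [hW.2.1] with ω hω
    have hxc : Continuous fun s => W s ω := hω.2
    have coordeq : ∀ α : ℝ, α ≠ 0 →
        ((1/2) * Real.log (quadVar W α T ω)) / Real.sqrt T
        = (Real.log T + Real.log (∫ u in (0:ℝ)..1,
            Real.exp (2*α*Real.sqrt T * (W (u*T) ω / Real.sqrt T)))) / (2*Real.sqrt T) := by
      intro α hα
      have harg : ∀ u : ℝ, 2*α*Real.sqrt T * (W (u*T) ω / Real.sqrt T) = 2*α* W (u*T) ω := by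
        intro u; field_simp
      have hquad : quadVar W α T ω = T * ∫ u in (0:ℝ)..1, Real.exp (2*α*W (u*T) ω) := by
        have h := intervalIntegral.integral_comp_mul_right
          (fun s => Real.exp (2*α*W s ω)) (ne_of_gt hT0) (a := 0) (b := 1)
        rw [zero_mul, one_mul, smul_eq_mul] at h
        unfold quadVar
        rw [h]
        field_simp
      have hIpos : 0 < ∫ u in (0:ℝ)..1, Real.exp (2*α*W (u*T) ω) :=
        integral01_exp_pos (fun u => W (u*T) ω)
          (hxc.comp (continuous_id.mul continuous_const)) (2*α)
      rw [hquad, Real.log_mul (ne_of_gt hT0) (ne_of_gt hIpos)]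
      simp_rw [harg]
      field_simp
      simp only [mul_comm T]
    apply congrArg
    have e1 := coordeq p (ne_of_gt hp)
    have e2 := coordeq (-q) (by simp [ne_of_gt hq])
    have e3 : W T ω / Real.sqrt T = W (1 * T) ω / Real.sqrt T := by rw [one_mul]
    unfold gvec
    rw [e1, e2, e3]
  calc (fun T : ℝ => ∫ ω, f (gvec p q T (fun u => W u ω)) ∂P) T
      = ∫ ω, f (gvec p q T (fun u => W (u * T) ω / Real.sqrt T)) ∂P :=
        (gvec_integral_eq P _ W (bm_scale P W hW T hT0) hW p q T f).symm
    _ = _ := (integral_congr_ae hA).symm
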